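/- There exists c_* > 0 with the following property: there exist pairwise disjoint finite sets Λ₀, Λ₁ ⊂ S² ∩ ℚ³ and, for each α ∈ {0,1} and each ξ ∈ Λ_α, a smooth positive function γ_ξ^{(α)} : B̄_{c_*}(Id) → (0,∞), such that (i) ξ ∈ Λ_α implies −ξ ∈ Λ_α and γ_{−ξ}^{(α)} = γ_ξ^{(α)}, and (ii) for each α ∈ {0,1} and every R ∈ B̄_{c_*}(Id) one has the decomposition R = (1/2) Σ_{ξ∈Λ_α} (γ_ξ^{(α)}(R))² (Id − ξ ⊗ ξ). -/

import Mathlib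

open MeasureTheory Real Filter

noncomputable section

/-- Points of ℝ³ (and values of vector fields). The torus 𝕋³ = ℝ³/(2πℤ)³ is represented by
(2πℤ)³-periodic functions on ℝ³, integrated over the fundamental cube `T3 = [-π,π]³`. -/
abbrev V3 := Fin 3 → ℝ

/-- 3×3 real matrices (as nested functions). -/
abbrev M3 := Fin 3 → Fin 3 → ℝ

/-- The fundamental cube [-π,π]³ of the torus 𝕋³. -/
def T3 : Set V3 := Set.Icc (fun _ => -π) (fun _ => π)

/-- Lebesgue measure restricted to the fundamental cube. -/
def μ3 : Measure V3 := volume.restrict T3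

/-- Euclidean dot product on ℝ³. -/
def dot3 (a b : V3) : ℝ := ∑ i, a i * b i

/-- Euclidean norm on ℝ³. -/
def enorm3 (a : V3) : ℝ := Real.sqrt (∑ i, (a i) ^ 2)

/-- Frobenius norm of a 3×3 matrix. -/
def frobM (R : M3) : ℝ := Real.sqrt (∑ i, ∑ j, (R i j) ^ 2)

/-- The 3×3 identity matrix. -/
def Id3 : M3 := fun i j => if i = j then 1 else 0

/-- (Euclidean) operator norm of a 3×3 matrix. -/
def opNorm3 (R : M3) : ℝ :=
  ⨆ x : {y : V3 // enorm3 y = 1}, enorm3 (fun i => ∑ j, R i j * x.1 j)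

/-- `f` is (2πℤ)³-periodic, i.e. a function on the torus 𝕋³. -/
def Periodic3 {α : Type*} (f : V3 → α) : Prop :=
  ∀ (x : V3) (k : Fin 3 → ℤ), f (fun i => x i + 2 * π * (k i : ℝ)) = f x

/-- `f` is (L·ℤ)³-periodic. -/
def PeriodicP3 {α : Type*} (L : ℝ) (f : V3 → α) : Prop :=
  ∀ (x : V3) (k : Fin 3 → ℤ), f (fun i => x i + L * (k i : ℝ)) = f x

/-- Partial derivative ∂ᵢ of a function on ℝ³. -/
def pderiv3 {E : Type*} [NormedAddCommGroup E] [NormedSpace ℝ E]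
    (i : Fin 3) (f : V3 → E) (x : V3) : E :=
  fderiv ℝ f x (Pi.single i 1)

/-- Gradient of a scalar function on ℝ³. -/
def grad3 (f : V3 → ℝ) (x : V3) : V3 := fun i => pderiv3 i f x

/-- Divergence of a vector field on ℝ³. -/
def div3 (w : V3 → V3) (x : V3) : ℝ := ∑ i, pderiv3 i (fun y => w y i) x

/-- Laplacian of a scalar function on ℝ³. -/
def lap3 (f : V3 → ℝ) (x : V3) : ℝ := ∑ i, pderiv3 i (fun y => pderiv3 i f y) x

/-- Curl of a vector field on ℝ³. -/
def curl3 (w : V3 → V3) (x : V3) : V3 :=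
  ![pderiv3 1 (fun y => w y 2) x - pderiv3 2 (fun y => w y 1) x,
    pderiv3 2 (fun y => w y 0) x - pderiv3 0 (fun y => w y 2) x,
    pderiv3 0 (fun y => w y 1) x - pderiv3 1 (fun y => w y 0) x]

/-- Cross product on ℝ³. -/
def cross3 (a b : V3) : V3 :=
  ![a 1 * b 2 - a 2 * b 1, a 2 * b 0 - a 0 * b 2, a 0 * b 1 - a 1 * b 0]

/-- Jacobian matrix ∇Φ of a map Φ : ℝ³ → ℝ³. -/
def jac3 (Φ : V3 → V3) (x : V3) : M3 := fun i j => pderiv3 j (fun y => Φ y i) x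

/-- A (jointly) smooth time-dependent field on ℝ × ℝ³. -/
def SmoothTD {E : Type*} [NormedAddCommGroup E] [NormedSpace ℝ E] (φ : ℝ → V3 → E) : Prop :=
  ContDiff ℝ (⊤ : ℕ∞) (fun q : ℝ × V3 => φ q.1 q.2)

/-- `φ` is compactly supported in time inside the time set `S`. -/
def CptSuppIn {α : Type*} [Zero α] (S : Set ℝ) (φ : ℝ → V3 → α) : Prop :=
  ∃ K : Set ℝ, IsCompact K ∧ K ⊆ S ∧ ∀ t ∉ K, ∀ x, φ t x = 0

/-- `t ↦ v(·,t)` is continuous on the time set `I` with values in L²(𝕋³). -/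
def ContL2On (I : Set ℝ) (v : ℝ → V3 → V3) : Prop :=
  ∀ t₀ ∈ I, ∀ ε > (0:ℝ), ∃ δ > (0:ℝ), ∀ t ∈ I, |t - t₀| < δ →
    (∫ x in T3, dot3 (v t x - v t₀ x) (v t x - v t₀ x)) < ε

/-- Weak solution of the incompressible Euler equations on 𝕋³ × I, belonging to C⁰(I; L²(𝕋³)):
each `v(·,t)` is periodic, square-integrable, zero-mean and weakly divergence free, and the
weak formulation holds against all smooth divergence-free test fields compactly supported in
the interior of `I`. -/
def IsEulerWeak (I : Set ℝ) (v : ℝ → V3 → V3) : Prop :=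
  (∀ t ∈ I, Periodic3 (v t)) ∧
  (∀ t ∈ I, MemLp (v t) 2 μ3) ∧
  ContL2On I v ∧
  (∀ t ∈ I, ∀ i, (∫ x in T3, v t x i) = 0) ∧
  (∀ t ∈ I, ∀ ψ : V3 → ℝ, ContDiff ℝ (⊤ : ℕ∞) ψ → Periodic3 ψ →
    (∫ x in T3, dot3 (v t x) (grad3 ψ x)) = 0) ∧
  (∀ φ : ℝ → V3 → V3, SmoothTD φ → (∀ t, Periodic3 (φ t)) →
    (∀ t x, div3 (φ t) x = 0) → CptSuppIn (interior I) φ →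
    (∫ t in I, ∫ x in T3,
      dot3 (v t x)
        (fun j => deriv (fun s => φ s x j) t
          + ∑ i, v t x i * pderiv3 i (fun y => φ t y j) x)) = 0)

/-- Weak solution of the incompressible Navier–Stokes equations with viscosity ν on 𝕋³ × I,
belonging to C⁰(I; L²(𝕋³)). -/
def IsNSWeak (ν : ℝ) (I : Set ℝ) (v : ℝ → V3 → V3) : Prop :=
  (∀ t ∈ I, Periodic3 (v t)) ∧
  (∀ t ∈ I, MemLp (v t) 2 μ3) ∧
  ContL2On I v ∧
  (∀ t ∈ I, ∀ i, (∫ x in T3, v t x i) = 0) ∧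
  (∀ t ∈ I, ∀ ψ : V3 → ℝ, ContDiff ℝ (⊤ : ℕ∞) ψ → Periodic3 ψ →
    (∫ x in T3, dot3 (v t x) (grad3 ψ x)) = 0) ∧
  (∀ φ : ℝ → V3 → V3, SmoothTD φ → (∀ t, Periodic3 (φ t)) →
    (∀ t x, div3 (φ t) x = 0) → CptSuppIn (interior I) φ →
    (∫ t in I, ∫ x in T3,
      dot3 (v t x)
        (fun j => deriv (fun s => φ s x j) t
          + (∑ i, v t x i * pderiv3 i (fun y => φ t y j) x)
          + ν * lap3 (fun y => φ t y j) x)) = 0)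

/-- k-th Fourier coefficient f̂(k) = (2π)⁻³ ∫_{𝕋³} f(x) e^{-i k·x} dx. -/
def fCoef (f : V3 → ℝ) (k : Fin 3 → ℤ) : ℂ :=
  ((2 * π) ^ 3)⁻¹ •
    ∫ x in T3, (f x : ℂ) * Complex.exp (-(Complex.I * (dot3 (fun i => (k i : ℝ)) x : ℂ)))

/-- Euclidean norm of a lattice point k ∈ ℤ³. -/
def zNorm (k : Fin 3 → ℤ) : ℝ := Real.sqrt (∑ i, ((k i : ℝ)) ^ 2)

/-- The summand |k|^{2β} |ŵ(k)|² in the (homogeneous) H^β norm of a vector field. -/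
def hsTerm (β : ℝ) (w : V3 → V3) (k : Fin 3 → ℤ) : ℝ :=
  zNorm k ^ (2 * β) * ∑ j, ‖fCoef (fun x => w x j) k‖ ^ 2

/-- Membership in the Sobolev space H^β(𝕋³): Σ_k |k|^{2β} |ŵ(k)|² < ∞. -/
def MemHs (β : ℝ) (w : V3 → V3) : Prop := Summable (hsTerm β w)

/-- The squared (homogeneous) H^β norm Σ_k |k|^{2β} |ŵ(k)|². -/
def hsSq (β : ℝ) (w : V3 → V3) : ℝ := ∑' k, hsTerm β w k

/-- `t ↦ v(·,t)` belongs to C⁰(I; H^β(𝕋³)). -/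
def ContHsOn (β : ℝ) (I : Set ℝ) (v : ℝ → V3 → V3) : Prop :=
  (∀ t ∈ I, MemHs β (v t)) ∧
  ∀ t₀ ∈ I, ∀ ε > (0:ℝ), ∃ δ > (0:ℝ), ∀ t ∈ I, |t - t₀| < δ →
    hsSq β (fun x => v t x - v t₀ x) < ε

/-- `g` is the distributional (weak) i-th partial derivative of `f` on the torus. -/
def IsWeakDeriv3 (i : Fin 3) (f g : V3 → ℝ) : Prop :=
  ∀ ψ : V3 → ℝ, ContDiff ℝ (⊤ : ℕ∞) ψ → Periodic3 ψ →
    (∫ x in T3, f x * pderiv3 i ψ x) = - ∫ x in T3, g x * ψ x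

/-- `t ↦ v(·,t)` belongs to C⁰(I; W^{1,p}(𝕋³)): at each time v and its distributional
gradient G lie in L^p, and both depend continuously on time in L^p. -/
def ContW1pOn (p : ℝ) (I : Set ℝ) (v : ℝ → V3 → V3) : Prop :=
  ∃ G : ℝ → V3 → Fin 3 → Fin 3 → ℝ,
    (∀ t ∈ I, MemLp (v t) (ENNReal.ofReal p) μ3 ∧
      MemLp (G t) (ENNReal.ofReal p) μ3 ∧
      ∀ j i, IsWeakDeriv3 i (fun x => v t x j) (fun x => G t x j i)) ∧
    (∀ t₀ ∈ I, ∀ ε > (0:ℝ), ∃ δ > (0:ℝ), ∀ t ∈ I, |t - t₀| < δ →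
      eLpNorm (fun x => v t x - v t₀ x) (ENNReal.ofReal p) μ3 < ENNReal.ofReal ε ∧
      eLpNorm (fun x => G t x - G t₀ x) (ENNReal.ofReal p) μ3 < ENNReal.ofReal ε)

/-- `v` belongs to the space-time Hölder space C^β(𝕋³ × I): bounded, with finite Hölder
seminorm in (x,t). -/
def HolderST (β : ℝ) (I : Set ℝ) (v : ℝ → V3 → V3) : Prop :=
  (∃ C : ℝ, ∀ t ∈ I, ∀ x, enorm3 (v t x) ≤ C) ∧
  (∃ C : ℝ, ∀ t ∈ I, ∀ s ∈ I, ∀ x y : V3,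
    enorm3 (v t x - v s y) ≤ C * (enorm3 (x - y) + |t - s|) ^ β)

/-- Smooth solution (v, p, R̊) of the Euler–Reynolds system on 𝕋³ × [0,T]:
∂ₜ v + div(v ⊗ v) + ∇p = div R̊, v divergence-free and zero-mean, p zero-mean,
R̊ symmetric and trace-free. -/
def IsERSol (T : ℝ) (v : ℝ → V3 → V3) (p : ℝ → V3 → ℝ) (R : ℝ → V3 → M3) : Prop :=
  SmoothTD v ∧ SmoothTD p ∧ SmoothTD R ∧
  (∀ t, Periodic3 (v t)) ∧ (∀ t, Periodic3 (p t)) ∧ (∀ t, Periodic3 (R t)) ∧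
  (∀ t ∈ Set.Icc (0:ℝ) T, ∀ x, div3 (v t) x = 0) ∧
  (∀ t ∈ Set.Icc (0:ℝ) T, ∀ i, (∫ x in T3, v t x i) = 0) ∧
  (∀ t ∈ Set.Icc (0:ℝ) T, (∫ x in T3, p t x) = 0) ∧
  (∀ t x i j, R t x i j = R t x j i) ∧
  (∀ t x, (∑ i, R t x i i) = 0) ∧
  (∀ t ∈ Set.Icc (0:ℝ) T, ∀ x, ∀ i,
    deriv (fun s => v s x i) t
      + (∑ j, pderiv3 j (fun y => v t y i * v t y j) x)
      + pderiv3 i (p t) x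
      = ∑ j, pderiv3 j (fun y => R t y i j) x)

/-- Smooth solution (v, p, R̊) of the Navier–Stokes–Reynolds system with viscosity ν on
𝕋³ × [0,T]: ∂ₜ v + div(v ⊗ v) + ∇p − νΔv = div R̊. -/
def IsNSRSol (ν T : ℝ) (v : ℝ → V3 → V3) (p : ℝ → V3 → ℝ) (R : ℝ → V3 → M3) : Prop :=
  SmoothTD v ∧ SmoothTD p ∧ SmoothTD R ∧
  (∀ t, Periodic3 (v t)) ∧ (∀ t, Periodic3 (p t)) ∧ (∀ t, Periodic3 (R t)) ∧
  (∀ t ∈ Set.Icc (0:ℝ) T, ∀ x, div3 (v t) x = 0) ∧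
  (∀ t ∈ Set.Icc (0:ℝ) T, ∀ i, (∫ x in T3, v t x i) = 0) ∧
  (∀ t ∈ Set.Icc (0:ℝ) T, (∫ x in T3, p t x) = 0) ∧
  (∀ t x i j, R t x i j = R t x j i) ∧
  (∀ t x, (∑ i, R t x i i) = 0) ∧
  (∀ t ∈ Set.Icc (0:ℝ) T, ∀ x, ∀ i,
    deriv (fun s => v s x i) t
      + (∑ j, pderiv3 j (fun y => v t y i * v t y j) x)
      + pderiv3 i (p t) x
      - ν * lap3 (fun y => v t y i) x
      = ∑ j, pderiv3 j (fun y => R t y i j) x)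

/-- ‖v‖_{C⁰(𝕋³×[0,T])} ≤ B. -/
def C0BoundV (T : ℝ) (v : ℝ → V3 → V3) (B : ℝ) : Prop :=
  ∀ t ∈ Set.Icc (0:ℝ) T, ∀ x, enorm3 (v t x) ≤ B

/-- ‖v‖_{C¹_{x,t}(𝕋³×[0,T])} ≤ B: v and all its first-order space and time derivatives
are bounded by B. -/
def C1BoundV (T : ℝ) (v : ℝ → V3 → V3) (B : ℝ) : Prop :=
  ∀ t ∈ Set.Icc (0:ℝ) T, ∀ x,
    enorm3 (v t x) ≤ B ∧
    enorm3 (fun i => deriv (fun s => v s x i) t) ≤ B ∧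
    ∀ j, enorm3 (fun i => pderiv3 j (fun y => v t y i) x) ≤ B

/-- ‖R̊‖_{C⁰(𝕋³×[0,T])} ≤ B for a matrix field. -/
def C0BoundM (T : ℝ) (R : ℝ → V3 → M3) (B : ℝ) : Prop :=
  ∀ t ∈ Set.Icc (0:ℝ) T, ∀ x, frobM (R t x) ≤ B

/-- sup_{t∈[0,T]} ‖v(·,t)‖_{L²(𝕋³)} ≤ B. -/
def L2Bound (T : ℝ) (v : ℝ → V3 → V3) (B : ℝ) : Prop :=
  ∀ t ∈ Set.Icc (0:ℝ) T, Real.sqrt (∫ x in T3, dot3 (v t x) (v t x)) ≤ B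

/-- sup_{t∈[0,T]} ‖R̊(·,t)‖_{L¹(𝕋³)} ≤ B for a matrix field. -/
def L1BoundM (T : ℝ) (R : ℝ → V3 → M3) (B : ℝ) : Prop :=
  ∀ t ∈ Set.Icc (0:ℝ) T, (∫ x in T3, frobM (R t x)) ≤ B

/-- The closed ball of radius ρ around the identity in the space of symmetric 3×3
matrices (operator norm). -/
def symBallOp (ρ : ℝ) : Set M3 :=
  {R | (∀ i j, R i j = R j i) ∧ opNorm3 (fun i j => R i j - Id3 i j) ≤ ρ}

/-- ξ is a unit vector with rational coordinates, i.e. ξ ∈ S² ∩ ℚ³. -/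
def IsRatUnit (ξ : V3) : Prop :=
  (∑ i, (ξ i) ^ 2 = 1) ∧ ∀ i, ∃ r : ℚ, ξ i = (r : ℝ)

/-- Sup norm of a function on ℝ³ (C⁰ norm for torus functions). -/
def supNormG {E : Type*} [NormedAddCommGroup E] (f : V3 → E) : ℝ := ⨆ x, ‖f x‖

/-- Hölder seminorm of exponent α of a function on ℝ³. -/
def holderSemiG (α : ℝ) {E : Type*} [NormedAddCommGroup E] (f : V3 → E) : ℝ :=
  ⨆ q : {q : V3 × V3 // q.1 ≠ q.2}, ‖f q.1.1 - f q.1.2‖ / enorm3 (q.1.1 - q.1.2) ^ α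

/-- Hölder norm ‖f‖_{C^{m,α}}: sup norms of derivatives up to order m plus the Hölder
seminorm of the order-m derivatives. -/
def CmAlphaNorm (m : ℕ) (α : ℝ) {E : Type*} [NormedAddCommGroup E] [NormedSpace ℝ E]
    (f : V3 → E) : ℝ :=
  (∑ k ∈ Finset.range (m + 1), supNormG (fun x => iteratedFDeriv ℝ k f x))
    + holderSemiG α (fun x => iteratedFDeriv ℝ m f x)

/-- Hölder norm ‖f‖_{C^θ} = sup|f| + Hölder seminorm, θ ∈ (0,1]. -/
def CthNorm (θ : ℝ) (f : V3 → ℝ) : ℝ := supNormG f + holderSemiG θ f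

open Classical in
/-- Hölder norm ‖f‖_{C^r} for real r = m + σ, m = ⌊r⌋, σ = r - m ∈ [0,1); the Hölder
seminorm term is omitted when σ = 0. -/
def CrNorm (r : ℝ) (f : V3 → ℝ) : ℝ :=
  (∑ k ∈ Finset.range (⌊r⌋₊ + 1), supNormG (fun x => iteratedFDeriv ℝ k f x))
    + (if (⌊r⌋₊ : ℝ) = r then 0
        else holderSemiG (r - ⌊r⌋₊) (fun x => iteratedFDeriv ℝ ⌊r⌋₊ f x))

/-- Mollification of `f` at length scale `l` with kernel `ψ`:
(f ∗ ψ_l)(x) = ∫ f(x−y) l⁻³ ψ(y/l) dy. -/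
def mollify (l : ℝ) (ψ f : V3 → ℝ) (x : V3) : ℝ :=
  ∫ y : V3, f (x - y) * ((l ^ 3)⁻¹ * ψ (l⁻¹ • y))



/-! ### Auxiliary construction for the geometric lemma -/

/-- Cast an integer vector to a real vector, scaled by 1/5. -/
def castV (q : Fin 3 → ℤ) : V3 := fun i => (q i : ℝ) / 5

lemma castV_inj : Function.Injective castV := by
  intro a b h
  funext i
  have h2 := congrFun h i
  simp only [castV] at h2
  have h3 : (a i : ℝ) = (b i : ℝ) := by linarith
  exact_mod_cast h3

lemma castV_neg (q : Fin 3 → ℤ) : -(castV q) = castV (-q) := by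
  funext i
  simp [castV, neg_div]

/-- The twelve directions (six with their negatives) of the two families,
scaled by 5 to have integer entries. -/
def vecq : Fin 2 → Fin 12 → Fin 3 → ℤ :=
  ![![![3, 4, 0], ![0, 3, 4], ![4, 0, 3],
     ![4, -3, 0], ![0, 4, -3], ![-3, 0, 4],
     ![-3, -4, 0], ![0, -3, -4], ![-4, 0, -3],
     ![-4, 3, 0], ![0, -4, 3], ![3, 0, -4]],
    ![![4, 3, 0], ![0, 4, 3], ![3, 0, 4],
     ![3, -4, 0], ![0, 3, -4], ![-4, 0, 3],
     ![-4, -3, 0], ![0, -4, -3], ![-3, 0, -4],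
     ![-3, 4, 0], ![0, -3, 4], ![4, 0, -3]]]

lemma vecq_inj (a : Fin 2) : Function.Injective (vecq a) := by
  revert a; decide

lemma vecq_sq_sum : ∀ (a : Fin 2) (k : Fin 12), (∑ i, (vecq a k i) ^ 2 : ℤ) = 25 := by
  decide

lemma vecq_neg_mem : ∀ (a : Fin 2), ∀ q ∈ Finset.univ.image (vecq a),
    -q ∈ Finset.univ.image (vecq a) := by
  decide

/-- The quadratic form giving the (squared) coefficient of a direction `xi`
in the decomposition of `R`; `s` is a sign distinguishing the two families. -/
def linB (s : ℝ) (xi : V3) (R : M3) : ℝ :=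
  xi 0 ^ 2 * (-(5/4) * R 0 0 + 3/4 * R 1 1 + 3/4 * R 2 2 + s * (-(7/12) * ((R 0 1 + R 1 0) / 2) + 7/12 * ((R 0 2 + R 2 0) / 2)))
    + xi 1 ^ 2 * (3/4 * R 0 0 - 5/4 * R 1 1 + 3/4 * R 2 2 + s * (7/12 * ((R 0 1 + R 1 0) / 2) - 7/12 * ((R 1 2 + R 2 1) / 2)))
    + xi 2 ^ 2 * (3/4 * R 0 0 + 3/4 * R 1 1 - 5/4 * R 2 2 + s * (-(7/12) * ((R 0 2 + R 2 0) / 2) + 7/12 * ((R 1 2 + R 2 1) / 2)))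
    + 2 * xi 0 * xi 1 * (s * (-(7/24) * R 0 0 + 7/24 * R 1 1) - 241/192 * ((R 0 1 + R 1 0) / 2) + 49/576 * ((R 0 2 + R 2 0) / 2) + 49/576 * ((R 1 2 + R 2 1) / 2))
    + 2 * xi 0 * xi 2 * (s * (7/24 * R 0 0 - 7/24 * R 2 2) + 49/576 * ((R 0 1 + R 1 0) / 2) - 241/192 * ((R 0 2 + R 2 0) / 2) + 49/576 * ((R 1 2 + R 2 1) / 2))
    + 2 * xi 1 * xi 2 * (s * (-(7/24) * R 1 1 + 7/24 * R 2 2) + 49/576 * ((R 0 1 + R 1 0) / 2) + 49/576 * ((R 0 2 + R 2 0) / 2) - 241/192 * ((R 1 2 + R 2 1) / 2))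

/-- The (squared) coefficient of the direction `xi` in the decomposition of `R`. -/
def linC (a : Fin 2) (xi : V3) (R : M3) : ℝ := linB (if a = 0 then 1 else -1) xi R

lemma linC_neg (a : Fin 2) (xi : V3) (R : M3) : linC a (-xi) R = linC a xi R := by
  simp only [linC, linB, Pi.neg_apply]
  ring

lemma contDiff_linB (s : ℝ) (xi : V3) : ContDiff ℝ (⊤ : ℕ∞) (linB s xi) := by
  unfold linB
  fun_prop (disch := norm_num)

lemma contDiff_linC (a : Fin 2) (xi : V3) : ContDiff ℝ (⊤ : ℕ∞) (linC a xi) := by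
  unfold linC
  exact contDiff_linB _ _

lemma sq_sum_eq_one {y : V3} (h : enorm3 y = 1) : (∑ i, y i ^ 2) = 1 := by
  have h0 : (0:ℝ) ≤ ∑ i, y i ^ 2 := Finset.sum_nonneg fun i _ => sq_nonneg _
  have h2 := congrArg (fun t : ℝ => t ^ 2) h
  simpa [enorm3, Real.sq_sqrt h0] using h2

lemma abs_entry_le_opNorm3 (E : M3) (i j : Fin 3) : |E i j| ≤ opNorm3 E := by
  classical
  set x : V3 := fun t => if t = j then (1:ℝ) else 0 with hxdef
  have hx : enorm3 x = 1 := by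
    have h1 : (∑ t, x t ^ 2) = 1 := by
      have hsq : ∀ t, x t ^ 2 = if t = j then (1:ℝ) else 0 := by
        intro t; rw [hxdef]; dsimp only; split <;> norm_num
      rw [Finset.sum_congr rfl fun t _ => hsq t]
      simp
    rw [enorm3, h1, Real.sqrt_one]
  have hcol : ∀ a, (∑ t, E a t * x t) = E a j := by
    intro a
    have hsq : ∀ t, E a t * x t = if t = j then E a t else 0 := by
      intro t; rw [hxdef]; dsimp only; split <;> norm_num
    rw [Finset.sum_congr rfl fun t _ => hsq t]
    simp
  have hEx : |E i j| ≤ enorm3 (fun a => ∑ t, E a t * x t) := by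
    have h1 : (E i j) ^ 2 ≤ ∑ a, (∑ t, E a t * x t) ^ 2 := by
      rw [Finset.sum_congr rfl fun a _ => by rw [hcol a]]
      exact Finset.single_le_sum (f := fun a => (E a j) ^ 2)
        (fun a _ => sq_nonneg _) (Finset.mem_univ i)
    calc |E i j| = Real.sqrt ((E i j) ^ 2) := (Real.sqrt_sq_eq_abs _).symm
      _ ≤ _ := Real.sqrt_le_sqrt h1
  have hbdd : BddAbove (Set.range fun y : {y : V3 // enorm3 y = 1} =>
      enorm3 (fun a => ∑ t, E a t * y.1 t)) := by
    refine ⟨Real.sqrt (∑ a, (∑ t, |E a t|) ^ 2), ?_⟩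
    rintro r ⟨y, rfl⟩
    have hy1 : ∀ t, |y.1 t| ≤ 1 := by
      intro t
      have hs := sq_sum_eq_one y.2
      have hle : (y.1 t) ^ 2 ≤ 1 := by
        have h1 : (y.1 t) ^ 2 ≤ ∑ a, (y.1 a) ^ 2 :=
          Finset.single_le_sum (f := fun a => (y.1 a) ^ 2)
            (fun a _ => sq_nonneg _) (Finset.mem_univ t)
        rw [hs] at h1
        exact h1
      calc |y.1 t| = Real.sqrt ((y.1 t) ^ 2) := (Real.sqrt_sq_eq_abs _).symm
        _ ≤ Real.sqrt 1 := Real.sqrt_le_sqrt hle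
        _ = 1 := Real.sqrt_one
    simp only [enorm3]
    apply Real.sqrt_le_sqrt
    apply Finset.sum_le_sum
    intro a _
    have habs : |∑ t, E a t * y.1 t| ≤ ∑ t, |E a t| := by
      refine (Finset.abs_sum_le_sum_abs _ _).trans (Finset.sum_le_sum fun t _ => ?_)
      rw [abs_mul]
      exact mul_le_of_le_one_right (abs_nonneg _) (hy1 t)
    calc (∑ t, E a t * y.1 t) ^ 2 = |∑ t, E a t * y.1 t| ^ 2 := (sq_abs _).symm
      _ ≤ (∑ t, |E a t|) ^ 2 := pow_le_pow_left₀ (abs_nonneg _) habs 2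
  exact hEx.trans (le_ciSup hbdd ⟨x, hx⟩)

lemma ball_entry {R : M3} (hR : R ∈ symBallOp (1/23)) (i j : Fin 3) :
    |R i j - Id3 i j| ≤ 1/23 :=
  (abs_entry_le_opNorm3 (fun i j => R i j - Id3 i j) i j).trans hR.2

set_option maxHeartbeats 0 in
lemma linC_lower (a : Fin 2) (R : M3) (hR : R ∈ symBallOp (1/23)) :
    ∀ k : Fin 12, (1/8 : ℝ) ≤ linC a (castV (vecq a k)) R := by
  have h00 := abs_le.mp (by simpa [Id3] using ball_entry hR 0 0)
  have h11 := abs_le.mp (by simpa [Id3] using ball_entry hR 1 1)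
  have h22 := abs_le.mp (by simpa [Id3] using ball_entry hR 2 2)
  have h01 := abs_le.mp (by simpa [Id3] using ball_entry hR 0 1)
  have h02 := abs_le.mp (by simpa [Id3] using ball_entry hR 0 2)
  have h12 := abs_le.mp (by simpa [Id3] using ball_entry hR 1 2)
  have h10 := abs_le.mp (by simpa [Id3] using ball_entry hR 1 0)
  have h20 := abs_le.mp (by simpa [Id3] using ball_entry hR 2 0)
  have h21 := abs_le.mp (by simpa [Id3] using ball_entry hR 2 1)
  fin_cases a <;>
    simp only [Fin.forall_fin_succ, IsEmpty.forall_iff, and_true] <;>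
    refine ⟨?_, ?_, ?_, ?_, ?_, ?_, ?_, ?_, ?_, ?_, ?_, ?_⟩ <;>
    (norm_num [linC, linB, castV, vecq, Matrix.cons_val_two, Matrix.vecHead, Matrix.vecTail]; linarith)

set_option maxHeartbeats 0 in
lemma key_identity (a : Fin 2) (R : M3) : ∀ i j : Fin 3,
    (∑ k : Fin 12, linC a (castV (vecq a k)) R *
      (Id3 i j - castV (vecq a k) i * castV (vecq a k) j)) = R i j + R j i := by
  fin_cases a <;>
    (simp only [Fin.forall_fin_succ, IsEmpty.forall_iff, and_true]
     refine ⟨⟨?_, ?_, ?_⟩, ⟨?_, ?_, ?_⟩, ⟨?_, ?_, ?_⟩⟩ <;>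
       (norm_num [linC, linB, castV, vecq, Id3, Fin.sum_univ_succ, Fin.ext_iff, Matrix.cons_val_two, Matrix.vecHead, Matrix.vecTail]; ring))

/-- Geometric lemma, Proposition 5.5 / Lemma 3.2 of [DLSZ13].
There exist c_* > 0, disjoint finite sets Λ₀, Λ₁ ⊂ S² ∩ ℚ³ and smooth positive
functions γ_ξ^{(α)} on B̄_{c_*}(Id) with γ_{−ξ} = γ_ξ, such that every symmetric R in
B̄_{c_*}(Id) decomposes as R = ½ Σ_{ξ∈Λ_α} γ_ξ^{(α)}(R)² (Id − ξ ⊗ ξ). -/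
theorem stmt_10 :
    ∃ cstar > (0:ℝ), ∃ Λ : Fin 2 → Finset V3, ∃ γ : Fin 2 → V3 → M3 → ℝ,
      Disjoint (Λ 0) (Λ 1) ∧
      (∀ α : Fin 2, ∀ ξ ∈ Λ α, IsRatUnit ξ) ∧
      (∀ α : Fin 2, ∀ ξ ∈ Λ α, -ξ ∈ Λ α ∧ γ α (-ξ) = γ α ξ) ∧
      (∀ α : Fin 2, ∀ ξ ∈ Λ α, ContDiffOn ℝ (⊤ : ℕ∞) (γ α ξ) (symBallOp cstar) ∧
        ∀ R ∈ symBallOp cstar, 0 < γ α ξ R) ∧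
      (∀ α : Fin 2, ∀ R ∈ symBallOp cstar, ∀ i j,
        R i j = (1/2) * ∑ ξ ∈ Λ α, (γ α ξ R) ^ 2 * (Id3 i j - ξ i * ξ j)) := by
  classical
  refine ⟨1/23, by norm_num,
    fun a => (Finset.univ.image (vecq a)).image castV,
    fun a xi R => Real.sqrt (linC a xi R), ?_, ?_, ?_, ?_, ?_⟩
  · exact (Finset.disjoint_image castV_inj).mpr (by decide)
  · rintro a xi hxi
    obtain ⟨q, hq, rfl⟩ := Finset.mem_image.mp hxi
    obtain ⟨k, -, rfl⟩ := Finset.mem_image.mp hq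
    refine ⟨?_, fun i => ⟨(vecq a k i : ℚ) / 5, by push_cast [castV]; ring⟩⟩
    have hcast : (∑ i, (castV (vecq a k)) i ^ 2)
        = ((∑ i, (vecq a k i) ^ 2 : ℤ) : ℝ) / 25 := by
      push_cast [castV, Fin.sum_univ_three]
      ring
    rw [hcast, vecq_sq_sum a k]
    norm_num
  · rintro a xi hxi
    obtain ⟨q, hq, rfl⟩ := Finset.mem_image.mp hxi
    obtain ⟨k, -, rfl⟩ := Finset.mem_image.mp hq
    constructor
    · rw [castV_neg]
      refine Finset.mem_image.mpr ⟨-(vecq a k), ?_, rfl⟩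
      exact vecq_neg_mem a _ (Finset.mem_image.mpr ⟨k, Finset.mem_univ _, rfl⟩)
    · funext R
      simp only [linC_neg]
  · rintro a xi hxi
    obtain ⟨q, hq, rfl⟩ := Finset.mem_image.mp hxi
    obtain ⟨k, -, rfl⟩ := Finset.mem_image.mp hq
    have hpos : ∀ R ∈ symBallOp (1/23), (0:ℝ) < linC a (castV (vecq a k)) R :=
      fun R hR => lt_of_lt_of_le (by norm_num) (linC_lower a R hR k)
    refine ⟨?_, fun R hR => Real.sqrt_pos.mpr (hpos R hR)⟩
    intro R hR
    exact (((contDiff_linC a (castV (vecq a k))).contDiffAt).sqrt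
      (ne_of_gt (hpos R hR))).contDiffWithinAt
  · intro a R hR i j
    have hsym := hR.1
    rw [Finset.sum_image (fun x _ y _ h => castV_inj h),
      Finset.sum_image (fun x _ y _ h => vecq_inj a h)]
    have hsq : ∀ k : Fin 12,
        Real.sqrt (linC a (castV (vecq a k)) R) ^ 2 = linC a (castV (vecq a k)) R :=
      fun k => Real.sq_sqrt (le_trans (by norm_num) (linC_lower a R hR k))
    simp only [hsq]
    rw [key_identity a R i j, hsym i j]
    ring

end
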